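/- Let Δ: [0,Λ] → ℝ be three times continuously differentiable with Δ(0) = 2, Δ'(0) = 0, and Δ''(0) < 0. Let K > 0 satisfy K ≥ sup_{λ∈[0,Λ]} |Δ'''(λ)|, set μ = 3|Δ''(0)|/K, and define p(λ) = Kλ³ − 3Δ''(0)λ² − 24. If p(Λ) > 0, then p has a unique root μ₀ in (0,Λ], and |Δ(λ)| < 2 for all λ ∈ (0, min{μ, μ₀, Λ}). -/

import Mathlib

open Set

lemma mono_aux {Λ : ℝ} {g g' : ℝ → ℝ}
    (hg : ∀ x ∈ Icc (0:ℝ) Λ, HasDerivWithinAt g (g' x) (Icc 0 Λ) x)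
    (h0 : ∀ x ∈ Icc (0:ℝ) Λ, 0 ≤ g' x) : MonotoneOn g (Icc 0 Λ) := by
  refine monotoneOn_of_hasDerivWithinAt_nonneg (f' := g') (convex_Icc _ _)
    (fun x hx => (hg x hx).continuousWithinAt) (fun x hx => ?_) (fun x hx => ?_)
  · exact (hg x (interior_subset hx)).mono interior_subset
  · exact h0 x (interior_subset hx)

/-- Quantified ellipticity criterion, case p(Λ) > 0: p has a unique root μ₀ in (0,Λ]
and |Δ| < 2 on (0, min{μ, μ₀, Λ}). -/
theorem stmt2 (Λ : ℝ) (hΛ : 0 < Λ)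
    (Δ d1 d2 d3 : ℝ → ℝ)
    (hd1 : ∀ x ∈ Icc (0:ℝ) Λ, HasDerivWithinAt Δ (d1 x) (Icc 0 Λ) x)
    (hd2 : ∀ x ∈ Icc (0:ℝ) Λ, HasDerivWithinAt d1 (d2 x) (Icc 0 Λ) x)
    (hd3 : ∀ x ∈ Icc (0:ℝ) Λ, HasDerivWithinAt d2 (d3 x) (Icc 0 Λ) x)
    (hcont : ContinuousOn d3 (Icc 0 Λ))
    (hΔ0 : Δ 0 = 2) (hd10 : d1 0 = 0) (hd20 : d2 0 < 0)
    (K : ℝ) (hK : 0 < K) (hKbound : ∀ x ∈ Icc (0:ℝ) Λ, |d3 x| ≤ K)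
    (μ : ℝ) (hμ : μ = 3 * |d2 0| / K)
    (p : ℝ → ℝ) (hp : ∀ lam : ℝ, p lam = K * lam^3 - 3 * d2 0 * lam^2 - 24)
    (hpΛ : 0 < p Λ) :
    ∃ μ₀ ∈ Ioc (0:ℝ) Λ, p μ₀ = 0 ∧ (∀ x ∈ Ioc (0:ℝ) Λ, p x = 0 → x = μ₀) ∧
      ∀ lam ∈ Ioo (0:ℝ) (min μ (min μ₀ Λ)), |Δ lam| < 2 := by
  have hpfun : p = fun lam => K * lam^3 - 3 * d2 0 * lam^2 - 24 := funext hp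
  -- p is strictly monotone on [0, Λ]
  have hpmono : StrictMonoOn p (Icc 0 Λ) := by
    rw [hpfun]
    apply strictMonoOn_of_hasDerivWithinAt_pos (convex_Icc _ _)
      (Continuous.continuousOn (by fun_prop)) (f' := fun x => 3 * K * x^2 - 6 * d2 0 * x)
    · intro x hx
      have h : HasDerivAt (fun lam => K * lam^3 - 3 * d2 0 * lam^2 - 24)
          (3 * K * x^2 - 6 * d2 0 * x) x := by
        have := (((hasDerivAt_pow 3 x).const_mul K).sub
          ((hasDerivAt_pow 2 x).const_mul (3 * d2 0))).sub_const 24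
        refine this.congr_deriv ?_
        push_cast; ring
      exact h.hasDerivWithinAt
    · intro x hx
      rw [interior_Icc] at hx
      have hx0 : 0 < x := hx.1
      nlinarith [sq_nonneg x]
  have hp0 : p 0 = -24 := by rw [hp]; ring
  -- existence of root
  have hIVT : (0:ℝ) ∈ p '' Ioo 0 Λ := by
    apply intermediate_value_Ioo hΛ.le (by rw [hpfun]; exact Continuous.continuousOn (by fun_prop))
    constructor
    · rw [hp0]; norm_num
    · exact hpΛ
  obtain ⟨μ₀, hμ₀mem, hμ₀root⟩ := hIVT
  have hμ₀Icc : μ₀ ∈ Icc (0:ℝ) Λ := ⟨hμ₀mem.1.le, hμ₀mem.2.le⟩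
  refine ⟨μ₀, ⟨hμ₀mem.1, hμ₀mem.2.le⟩, hμ₀root, ?_, ?_⟩
  · intro x hx hpx
    rcases lt_trichotomy x μ₀ with h | h | h
    · exact absurd (hpmono ⟨hx.1.le, hx.2⟩ hμ₀Icc h) (by rw [hpx, hμ₀root]; simp)
    · exact h
    · exact absurd (hpmono hμ₀Icc ⟨hx.1.le, hx.2⟩ h) (by rw [hpx, hμ₀root]; simp)
  -- Taylor bounds
  · have hd2bound : ∀ x ∈ Icc (0:ℝ) Λ, |d2 x - d2 0| ≤ K * (x - 0) := by
      intro x hx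
      exact norm_image_sub_le_of_norm_deriv_le_segment' hd3
        (fun y hy => hKbound y ⟨hy.1, hy.2.le⟩) x hx
    have hpoly2 : ∀ (a b : ℝ) (x : ℝ), HasDerivAt (fun y => a * y + b * y^2 / 2)
        (a + b * x) x := by
      intro a b x
      have := (((hasDerivAt_id x).const_mul a).add
        (((hasDerivAt_pow 2 x).const_mul b).div_const 2))
      refine this.congr_deriv ?_
      push_cast; ring
    have hpoly3 : ∀ (a b : ℝ) (x : ℝ), HasDerivAt (fun y => 2 + a * y^2 / 2 + b * y^3 / 6)
        (a * x + b * x^2 / 2) x := by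
      intro a b x
      have := ((hasDerivAt_const x (2:ℝ)).add
        (((hasDerivAt_pow 2 x).const_mul a).div_const 2)).add
        (((hasDerivAt_pow 3 x).const_mul b).div_const 6)
      refine this.congr_deriv ?_
      push_cast; ring
    -- d1 bounds
    have hupper1 : ∀ x ∈ Icc (0:ℝ) Λ, d1 x ≤ d2 0 * x + K * x^2 / 2 := by
      have hm : MonotoneOn (fun x => d2 0 * x + K * x^2 / 2 - d1 x) (Icc 0 Λ) := by
        apply mono_aux (g' := fun x => d2 0 + K * x - d2 x)
        · intro x hx
          exact (hpoly2 (d2 0) K x).hasDerivWithinAt.sub (hd2 x hx)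
        · intro x hx
          have := (abs_le.mp (hd2bound x hx)).2
          linarith
      intro x hx
      have := hm (left_mem_Icc.mpr hΛ.le) hx hx.1
      norm_num [hd10] at this
      linarith
    have hlower1 : ∀ x ∈ Icc (0:ℝ) Λ, d2 0 * x - K * x^2 / 2 ≤ d1 x := by
      have hm : MonotoneOn (fun x => d1 x - (d2 0 * x + (-K) * x^2 / 2)) (Icc 0 Λ) := by
        apply mono_aux (g' := fun x => d2 x - (d2 0 + (-K) * x))
        · intro x hx
          exact (hd2 x hx).sub (hpoly2 (d2 0) (-K) x).hasDerivWithinAt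
        · intro x hx
          have := (abs_le.mp (hd2bound x hx)).1
          linarith
      intro x hx
      have := hm (left_mem_Icc.mpr hΛ.le) hx hx.1
      norm_num [hd10] at this
      linarith
    -- Δ bounds
    have hupper0 : ∀ x ∈ Icc (0:ℝ) Λ, Δ x ≤ 2 + d2 0 * x^2 / 2 + K * x^3 / 6 := by
      have hm : MonotoneOn (fun x => 2 + d2 0 * x^2 / 2 + K * x^3 / 6 - Δ x) (Icc 0 Λ) := by
        apply mono_aux (g' := fun x => (d2 0 * x + K * x^2 / 2) - d1 x)
        · intro x hx
          exact (hpoly3 (d2 0) K x).hasDerivWithinAt.sub (hd1 x hx)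
        · intro x hx
          have := hupper1 x hx
          linarith
      intro x hx
      have := hm (left_mem_Icc.mpr hΛ.le) hx hx.1
      norm_num [hΔ0] at this
      linarith
    have hlower0 : ∀ x ∈ Icc (0:ℝ) Λ, 2 + d2 0 * x^2 / 2 - K * x^3 / 6 ≤ Δ x := by
      have hm : MonotoneOn (fun x => Δ x - (2 + d2 0 * x^2 / 2 + (-K) * x^3 / 6)) (Icc 0 Λ) := by
        apply mono_aux (g' := fun x => d1 x - (d2 0 * x + (-K) * x^2 / 2))
        · intro x hx
          exact (hd1 x hx).sub (hpoly3 (d2 0) (-K) x).hasDerivWithinAt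
        · intro x hx
          have := hlower1 x hx
          linarith
      intro x hx
      have := hm (left_mem_Icc.mpr hΛ.le) hx hx.1
      norm_num [hΔ0] at this
      linarith
    intro lam hlam
    obtain ⟨hl0, hlmin⟩ := hlam
    have hlμ : lam < μ := lt_of_lt_of_le hlmin (min_le_left _ _)
    have hlμ₀ : lam < μ₀ := lt_of_lt_of_le hlmin ((min_le_right _ _).trans (min_le_left _ _))
    have hlΛ : lam ≤ Λ :=
      le_of_lt (lt_of_lt_of_le hlmin ((min_le_right _ _).trans (min_le_right _ _)))
    have hlIcc : lam ∈ Icc (0:ℝ) Λ := ⟨hl0.le, hlΛ⟩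
    have habs : |d2 0| = -(d2 0) := abs_of_neg hd20
    rw [abs_lt]
    constructor
    · have hplam : p lam < 0 := by
        have := hpmono hlIcc hμ₀Icc hlμ₀
        rw [hμ₀root] at this; exact this
      rw [hp] at hplam
      have := hlower0 lam hlIcc
      linarith
    · have hlμ' : lam < 3 * -(d2 0) / K := by rw [hμ, habs] at hlμ; exact hlμ
      have hKlam : lam * K < 3 * -(d2 0) := (lt_div_iff₀ hK).mp hlμ'
      have key : lam^2 * (lam * K) < lam^2 * (3 * -(d2 0)) :=
        mul_lt_mul_of_pos_left hKlam (by positivity)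
      have := hupper0 lam hlIcc
      nlinarith
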